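/- (Theorem 2, input-RC-filter design cannot stabilize: generalized Theorem 1.) Fix reals D ∈ (0,1], L > 0, C > 0, p₁ > 0, p₂ > 0. Then for all reals a₁, b₁, a₂, b₂ (arbitrary modifications, by feedback and/or input-side passive filtering, of the inductor-current rows), there exists R₀ > 0 such that for all R ≥ R₀ the real 4×4 matrix with rows: row 1 = (−D·R/L + a₁, b₁, −D·R/L, 0); row 2 = (1/C, p₁, 0, 0); row 3 = (−D·R/L, 0, −2·D·R/L + a₂, b₂); row 4 = (0, 0, 1/C, p₂) is not Hurwitz, i.e., it has a complex eigenvalue with nonnegative real part. -/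

import Mathlib

open Polynomial Matrix Complex

/-- A real square matrix is Hurwitz if every complex eigenvalue has strictly
negative real part. -/
def Matrix.IsHurwitz {n : Type*} [Fintype n] [DecidableEq n]
    (M : Matrix n n ℝ) : Prop :=
  ∀ μ ∈ spectrum ℂ (M.map Complex.ofReal), μ.re < 0

lemma multiset_card_eq_four' {α : Type*} {s : Multiset α} (h : Multiset.card s = 4) :
    ∃ a b c d, s = {a, b, c, d} := by
  induction s using Multiset.induction_on with
  | empty => simp at h
  | cons a t _ =>
    simp only [Multiset.card_cons] at h
    obtain ⟨b, c, d, rfl⟩ := Multiset.card_eq_three.mp (show Multiset.card t = 3 by omega)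
    exact ⟨a, b, c, d, rfl⟩

lemma my_eval_charpoly {n : Type*} [Fintype n] [DecidableEq n] {R : Type*} [CommRing R]
    (M : Matrix n n R) (x : R) :
    M.charpoly.eval x = (Matrix.diagonal (fun _ => x) - M).det := by
  rw [Matrix.charpoly, ← Polynomial.coe_evalRingHom, RingHom.map_det]
  congr 1
  ext i j
  by_cases h : i = j <;>
    simp [h, Matrix.charmatrix_apply, Matrix.diagonal, Matrix.map_apply]

lemma mem_spectrum_iff_root' (A : Matrix (Fin 4) (Fin 4) ℂ) (z : ℂ) :
    z ∈ spectrum ℂ A ↔ A.charpoly.IsRoot z := by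
  rw [spectrum.mem_iff, Polynomial.IsRoot, my_eval_charpoly]
  rw [Matrix.isUnit_iff_isUnit_det, isUnit_iff_ne_zero, not_ne_iff]
  congr! 2

set_option maxHeartbeats 1600000 in
lemma charpoly_fin_four' (m00 m01 m02 m03 m10 m11 m12 m13 m20 m21 m22 m23 m30 m31 m32 m33 : ℝ) :
    (!![m00, m01, m02, m03; m10, m11, m12, m13; m20, m21, m22, m23; m30, m31, m32, m33] :
      Matrix (Fin 4) (Fin 4) ℝ).charpoly =
      X ^ 4 + C (-m33 - m22 - m11 - m00) * X ^ 3 + C (-m23*m32 + m22*m33 - m13*m31 - m12*m21 + m11*m33 + m11*m22 - m03*m30 - m02*m20 - m01*m10 + m00*m33 + m00*m22 + m00*m11) * X ^ 2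
        + C (m13*m22*m31 - m13*m21*m32 - m12*m23*m31 + m12*m21*m33 + m11*m23*m32 - m11*m22*m33 + m03*m22*m30 - m03*m20*m32 + m03*m11*m30 - m03*m10*m31 - m02*m23*m30 + m02*m20*m33 + m02*m11*m20 - m02*m10*m21 - m01*m13*m30 - m01*m12*m20 + m01*m10*m33 + m01*m10*m22 + m00*m23*m32 - m00*m22*m33 + m00*m13*m31 + m00*m12*m21 - m00*m11*m33 - m00*m11*m22) * X + C (m03*m12*m21*m30 - m03*m12*m20*m31 - m03*m11*m22*m30 + m03*m11*m20*m32 + m03*m10*m22*m31 - m03*m10*m21*m32 - m02*m13*m21*m30 + m02*m13*m20*m31 + m02*m11*m23*m30 - m02*m11*m20*m33 - m02*m10*m23*m31 + m02*m10*m21*m33 + m01*m13*m22*m30 - m01*m13*m20*m32 - m01*m12*m23*m30 + m01*m12*m20*m33 + m01*m10*m23*m32 - m01*m10*m22*m33 - m00*m13*m22*m31 + m00*m13*m21*m32 + m00*m12*m23*m31 - m00*m12*m21*m33 - m00*m11*m23*m32 + m00*m11*m22*m33) := by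
  apply Polynomial.funext
  intro x
  rw [my_eval_charpoly]
  have hd : (Matrix.diagonal (fun _ => x) : Matrix (Fin 4) (Fin 4) ℝ) -
      !![m00, m01, m02, m03; m10, m11, m12, m13; m20, m21, m22, m23; m30, m31, m32, m33] =
      !![x - m00, -m01, -m02, -m03; -m10, x - m11, -m12, -m13;
         -m20, -m21, x - m22, -m23; -m30, -m31, -m32, x - m33] := by
    ext i j
    fin_cases i <;> fin_cases j <;> simp [Matrix.diagonal]
  rw [hd]
  rw [Matrix.det_succ_row_zero]
  simp [Fin.sum_univ_succ, Matrix.det_fin_three, Fin.succAbove]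
  ring

lemma coeff_zero_explicit (γ3 γ2 γ1 γ0 : ℝ) :
    (X ^ 4 + C γ3 * X ^ 3 + C γ2 * X ^ 2 + C γ1 * X + C γ0).coeff 0 = γ0 := by
  simp only [Polynomial.coeff_add, Polynomial.coeff_C_mul, Polynomial.coeff_X_pow,
    Polynomial.coeff_C, Polynomial.coeff_X]
  norm_num

lemma coeff_one_explicit (γ3 γ2 γ1 γ0 : ℝ) :
    (X ^ 4 + C γ3 * X ^ 3 + C γ2 * X ^ 2 + C γ1 * X + C γ0).coeff 1 = γ1 := by
  simp only [Polynomial.coeff_add, Polynomial.coeff_C_mul, Polynomial.coeff_X_pow,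
    Polynomial.coeff_C, Polynomial.coeff_X]
  norm_num

lemma exists_nonneg_re' (M : Matrix (Fin 4) (Fin 4) ℝ)
    (h0 : 0 < M.charpoly.coeff 0) (h1 : M.charpoly.coeff 1 < 0) :
    ∃ μ ∈ spectrum ℂ (M.map Complex.ofReal), 0 ≤ μ.re := by
  by_contra hcon
  push_neg at hcon
  set A : Matrix (Fin 4) (Fin 4) ℂ := M.map Complex.ofReal with hA
  have hcp : A.charpoly = M.charpoly.map Complex.ofRealHom :=
    Matrix.charpoly_map M Complex.ofRealHom
  have hmon : A.charpoly.Monic := Matrix.charpoly_monic A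
  have hdeg : A.charpoly.natDegree = 4 := by
    rw [Matrix.charpoly_natDegree_eq_dim]; simp
  have hsplit : A.charpoly.Splits := IsAlgClosed.splits _
  have hcard : Multiset.card A.charpoly.roots = 4 := by
    rw [Polynomial.splits_iff_card_roots.mp hsplit, hdeg]
  obtain ⟨a, b, c, d, hroots⟩ := multiset_card_eq_four' hcard
  have hfac : A.charpoly = (X - C a) * ((X - C b) * ((X - C c) * ((X - C d) * 1))) := by
    have := hsplit.eq_prod_roots_of_monic hmon
    rw [hroots] at this
    simpa [Multiset.map_cons, Multiset.prod_cons] using this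
  have hvieta : A.charpoly =
      X ^ 4 - C (a + b + c + d) * X ^ 3 + C (a*b + a*c + a*d + b*c + b*d + c*d) * X ^ 2
        - C (a*b*c + a*b*d + a*c*d + b*c*d) * X + C (a*b*c*d) := by
    rw [hfac]; simp only [map_add, _root_.map_mul]; ring
  have hc0 : (M.charpoly.coeff 0 : ℂ) = a * b * c * d := by
    have : A.charpoly.coeff 0 = a * b * c * d := by
      rw [hvieta]
      simp only [Polynomial.coeff_add, Polynomial.coeff_sub, Polynomial.coeff_C_mul,
        Polynomial.coeff_X_pow, Polynomial.coeff_C, Polynomial.coeff_X]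
      norm_num
    rw [← this, hcp, Polynomial.coeff_map]; rfl
  have hc1 : (M.charpoly.coeff 1 : ℂ) = -(a*b*c + a*b*d + a*c*d + b*c*d) := by
    have : A.charpoly.coeff 1 = -(a*b*c + a*b*d + a*c*d + b*c*d) := by
      rw [hvieta]
      simp only [Polynomial.coeff_add, Polynomial.coeff_sub, Polynomial.coeff_C_mul,
        Polynomial.coeff_X_pow, Polynomial.coeff_C, Polynomial.coeff_X]
      norm_num
    rw [← this, hcp, Polynomial.coeff_map]; rfl
  have hmem : ∀ z ∈ ({a, b, c, d} : Multiset ℂ), z.re < 0 ∧ z ≠ 0 := by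
    intro z hz
    have hzr : A.charpoly.IsRoot z := Polynomial.isRoot_of_mem_roots (by rw [hroots]; exact hz)
    have := hcon z ((mem_spectrum_iff_root' A z).mpr hzr)
    refine ⟨this, fun h => by simp [h] at this⟩
  obtain ⟨ra, ha⟩ := hmem a (by simp)
  obtain ⟨rb, hb⟩ := hmem b (by simp)
  obtain ⟨rc, hc⟩ := hmem c (by simp)
  obtain ⟨rd, hd⟩ := hmem d (by simp)
  have hsum : a⁻¹ + b⁻¹ + c⁻¹ + d⁻¹ =
      ((-(M.charpoly.coeff 1) / M.charpoly.coeff 0 : ℝ) : ℂ) := by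
    push_cast
    rw [hc0, hc1]
    field_simp
    ring
  have hre : (a⁻¹ + b⁻¹ + c⁻¹ + d⁻¹).re = -(M.charpoly.coeff 1) / M.charpoly.coeff 0 := by
    rw [hsum, Complex.ofReal_re]
  have hpos : 0 < -(M.charpoly.coeff 1) / M.charpoly.coeff 0 :=
    div_pos (by linarith) h0
  have hneg : ∀ z : ℂ, z.re < 0 → z ≠ 0 → z⁻¹.re < 0 := by
    intro z hz hz0
    rw [Complex.inv_re]
    exact div_neg_of_neg_of_pos hz (Complex.normSq_pos.mpr hz0)
  have := hneg a ra ha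
  have := hneg b rb hb
  have := hneg c rc hc
  have := hneg d rd hd
  simp only [Complex.add_re] at hre
  linarith

set_option maxHeartbeats 1600000

theorem input_RC_filter_cannot_stabilize
    (D L C p₁ p₂ : ℝ) (hD : 0 < D ∧ D ≤ 1) (hL : 0 < L) (hC : 0 < C)
    (hp₁ : 0 < p₁) (hp₂ : 0 < p₂) :
    ∀ a₁ b₁ a₂ b₂ : ℝ, ∃ R₀ > (0 : ℝ), ∀ R ≥ R₀,
      ¬ Matrix.IsHurwitz
          !![-(D * R / L) + a₁, b₁, -(D * R / L), 0;
             1 / C, p₁, 0, 0;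
             -(D * R / L), 0, -(2 * D * R / L) + a₂, b₂;
             0, 0, 1 / C, p₂] ∧
      ∃ μ ∈ spectrum ℂ
        ((!![-(D * R / L) + a₁, b₁, -(D * R / L), 0;
             1 / C, p₁, 0, 0;
             -(D * R / L), 0, -(2 * D * R / L) + a₂, b₂;
             0, 0, 1 / C, p₂] : Matrix (Fin 4) (Fin 4) ℝ).map
          Complex.ofReal), 0 ≤ μ.re := by
  intro a₁ b₁ a₂ b₂
  obtain ⟨hD0, -⟩ := hD
  obtain ⟨A1, hA1⟩ : ∃ x : ℝ,
      x = b₂*(1/C)*p₁ - a₂*p₁*p₂ + 2*b₁*(1/C)*p₂ - 2*a₁*p₁*p₂ := ⟨_, rfl⟩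
  obtain ⟨A0, hA0⟩ : ∃ x : ℝ,
      x = b₁*b₂*(1/C)^2 - b₁*a₂*(1/C)*p₂ - a₁*b₂*(1/C)*p₁ + a₁*a₂*p₁*p₂ := ⟨_, rfl⟩
  obtain ⟨B1, hB1⟩ : ∃ x : ℝ,
      x = 3*p₁*p₂ - b₂*(1/C) + a₂*p₂ + a₂*p₁ - 2*b₁*(1/C) + 2*a₁*p₂ + 2*a₁*p₁ := ⟨_, rfl⟩
  obtain ⟨B0, hB0⟩ : ∃ x : ℝ,
      x = b₂*(1/C)*p₁ - a₂*p₁*p₂ + b₁*(1/C)*p₂ + b₁*a₂*(1/C) - a₁*p₁*p₂ + a₁*b₂*(1/C)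
          - a₁*a₂*p₂ - a₁*a₂*p₁ := ⟨_, rfl⟩
  obtain ⟨S, hS⟩ : ∃ x : ℝ, x = |A1| + |A0| + |B1| + |B0| := ⟨_, rfl⟩
  have hS0 : 0 ≤ S := by rw [hS]; positivity
  obtain ⟨T, hT⟩ : ∃ x : ℝ, x = 1 + S/(p₁*p₂) + S/(p₁+p₂) := ⟨_, rfl⟩
  have hp12 : 0 < p₁ * p₂ := mul_pos hp₁ hp₂
  have hpsum : 0 < p₁ + p₂ := by linarith
  have hT1 : 1 ≤ T := by
    have h1 : 0 ≤ S/(p₁*p₂) := by positivity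
    have h2 : 0 ≤ S/(p₁+p₂) := by positivity
    linarith [hT]
  have hT0 : 0 < T := by linarith
  refine ⟨L / D * T, by positivity, fun R hR => ?_⟩
  obtain ⟨d, hd⟩ : ∃ x : ℝ, x = D * R / L := ⟨_, rfl⟩
  have hdT : T ≤ d := by
    have h1 : D * (L / D * T) / L = T := by field_simp
    have h2 : D * (L / D * T) / L ≤ D * R / L := by gcongr
    rw [h1, ← hd] at h2
    exact h2
  have hd1 : 1 ≤ d := le_trans hT1 hdT
  have hd0 : 0 ≤ d := by linarith
  have h01 : p₁ * p₂ + S ≤ p₁ * p₂ * d := by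
    have e1 : p₁ * p₂ * (S/(p₁*p₂)) = S := by field_simp
    have e2 : 0 ≤ p₁ * p₂ * (S/(p₁+p₂)) := by positivity
    have e3 : p₁ * p₂ * T ≤ p₁ * p₂ * d := mul_le_mul_of_nonneg_left hdT hp12.le
    rw [hT] at e3
    nlinarith [e3]
  have h02 : (p₁ + p₂) + S ≤ (p₁ + p₂) * d := by
    have e1 : (p₁+p₂) * (S/(p₁+p₂)) = S := by field_simp
    have e2 : 0 ≤ (p₁+p₂) * (S/(p₁*p₂)) := by positivity
    have e3 : (p₁+p₂) * T ≤ (p₁+p₂) * d := mul_le_mul_of_nonneg_left hdT hpsum.le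
    rw [hT] at e3
    nlinarith [e3]
  have habs : -S ≤ A1 ∧ -S ≤ A0 ∧ B1 ≤ S ∧ B0 ≤ S := by
    refine ⟨?_, ?_, ?_, ?_⟩ <;>
      · rw [hS]
        have := neg_abs_le A1; have := neg_abs_le A0
        have := le_abs_self B1; have := le_abs_self B0
        have := abs_nonneg A1; have := abs_nonneg A0
        have := abs_nonneg B1; have := abs_nonneg B0
        linarith
  obtain ⟨hA1', hA0', hB1', hB0'⟩ := habs
  have hq0 : 0 < p₁*p₂*d^2 + A1*d + A0 := by
    have k1 : (p₁*p₂ + S)*d ≤ (p₁*p₂*d)*d := mul_le_mul_of_nonneg_right h01 hd0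
    have k2 : 0 ≤ (S + A1)*d := mul_nonneg (by linarith) hd0
    nlinarith [k1, k2]
  have hq1 : -(p₁+p₂)*d^2 + B1*d + B0 < 0 := by
    have k1 : ((p₁+p₂) + S)*d ≤ ((p₁+p₂)*d)*d := mul_le_mul_of_nonneg_right h02 hd0
    have k2 : (B1 - S)*d ≤ 0 := mul_nonpos_of_nonpos_of_nonneg (by linarith) hd0
    nlinarith [k1, k2]
  have hcp := charpoly_fin_four' (-(D * R / L) + a₁) b₁ (-(D * R / L)) 0
      (1 / C) p₁ 0 0 (-(D * R / L)) 0 (-(2 * D * R / L) + a₂) b₂ 0 0 (1 / C) p₂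
  have h0 : 0 < (!![-(D * R / L) + a₁, b₁, -(D * R / L), 0;
             1 / C, p₁, 0, 0;
             -(D * R / L), 0, -(2 * D * R / L) + a₂, b₂;
             0, 0, 1 / C, p₂] : Matrix (Fin 4) (Fin 4) ℝ).charpoly.coeff 0 := by
    rw [hcp, coeff_zero_explicit]
    refine lt_of_lt_of_eq hq0 ?_
    rw [hA1, hA0, hd]
    ring
  have h1 : (!![-(D * R / L) + a₁, b₁, -(D * R / L), 0;
             1 / C, p₁, 0, 0;
             -(D * R / L), 0, -(2 * D * R / L) + a₂, b₂;
             0, 0, 1 / C, p₂] : Matrix (Fin 4) (Fin 4) ℝ).charpoly.coeff 1 < 0 := by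
    rw [hcp, coeff_one_explicit]
    refine lt_of_eq_of_lt ?_ hq1
    rw [hB1, hB0, hd]
    ring
  obtain ⟨μ, hμmem, hμre⟩ := exists_nonneg_re' _ h0 h1
  exact ⟨fun hHur => absurd (hHur μ hμmem) (not_lt.mpr hμre), μ, hμmem, hμre⟩
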